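/- The map h/k ↦ (k-h)/h is an order-reversing bijection from the right halfsequence F^{≥1/2}(B(2m), m) onto the Farey sequence F_m, with inverse h/k ↦ k/(k+h). -/

import Mathlib

/-- The Farey sequence of order `m`: rationals in `[0,1]` with denominator at most `m`. -/
def Farey (m : ℕ) : Set ℚ := {q | 0 ≤ q ∧ q ≤ 1 ∧ q.den ≤ m}

/-- The Farey subsequence `F(B(2m), m)`: fractions `h/k` in lowest terms with
`0 ≤ h/k ≤ 1`, `k ≤ 2m` and `k - m ≤ h ≤ m`. -/
def FareyB (m : ℕ) : Set ℚ :=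
  {q | 0 ≤ q ∧ q ≤ 1 ∧ q.den ≤ 2 * m ∧ (q.den : ℤ) - m ≤ q.num ∧ q.num ≤ m}

/-- The left halfsequence `F^{≤1/2}(B(2m), m)`. -/
def FareyBLeft (m : ℕ) : Set ℚ := {q ∈ FareyB m | q ≤ 1/2}

/-- The right halfsequence `F^{≥1/2}(B(2m), m)`. -/
def FareyBRight (m : ℕ) : Set ℚ := {q ∈ FareyB m | 1/2 ≤ q}

lemma key_nd (q : ℚ) : (q.num : ℚ) = q * (q.den : ℚ) := by
  have hd : ((q.den : ℕ) : ℚ) ≠ 0 := by exact_mod_cast q.den_nz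
  exact (div_eq_iff hd).mp (Rat.num_div_den q)

lemma f_eq (q : ℚ) (hq : 0 < q) :
    (1 - q)/q = (((q.den : ℤ) - q.num : ℤ) : ℚ) / ((q.num : ℤ) : ℚ) := by
  have hn : ((q.num : ℤ) : ℚ) ≠ 0 := by exact_mod_cast (Rat.num_pos.mpr hq).ne'
  rw [div_eq_div_iff (ne_of_gt hq) hn]
  push_cast
  rw [key_nd q]
  ring

lemma coprime_q (q : ℚ) : IsCoprime q.num (q.den : ℤ) := by
  rw [Int.isCoprime_iff_gcd_eq_one]; exact q.reduced

lemma f_num (q : ℚ) (hq : 0 < q) : ((1 - q)/q).num = (q.den : ℤ) - q.num := by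
  rw [f_eq q hq]
  have hc : IsCoprime ((q.den : ℤ) - q.num) q.num := by
    have := (coprime_q q).symm.add_mul_left_left (-1)
    simpa [mul_comm, sub_eq_add_neg] using this
  exact Rat.num_div_eq_of_coprime (Rat.num_pos.mpr hq)
    (Int.isCoprime_iff_gcd_eq_one.mp hc)

lemma f_den (q : ℚ) (hq : 0 < q) : (((1 - q)/q).den : ℤ) = q.num := by
  rw [f_eq q hq]
  have hc : IsCoprime ((q.den : ℤ) - q.num) q.num := by
    have := (coprime_q q).symm.add_mul_left_left (-1)
    simpa [mul_comm, sub_eq_add_neg] using this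
  exact Rat.den_div_eq_of_coprime (Rat.num_pos.mpr hq)
    (Int.isCoprime_iff_gcd_eq_one.mp hc)

lemma g_eq (r : ℚ) (hr : 0 ≤ r) :
    1/(1 + r) = ((r.den : ℤ) : ℚ) / (((r.num + r.den : ℤ)) : ℚ) := by
  have h1 : (0:ℚ) < 1 + r := by linarith
  have hs : ((r.num + (r.den:ℤ) : ℤ) : ℚ) ≠ 0 := by
    have h0 : (0:ℤ) ≤ r.num := Rat.num_nonneg.mpr hr
    have : (0:ℤ) < r.num + r.den := by positivity
    exact_mod_cast this.ne'
  rw [div_eq_div_iff h1.ne' hs]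
  push_cast
  rw [key_nd r]
  ring

lemma g_pos_den (r : ℚ) (hr : 0 ≤ r) : (0:ℤ) < r.num + r.den := by
  have h0 : (0:ℤ) ≤ r.num := Rat.num_nonneg.mpr hr
  positivity

lemma g_coprime (r : ℚ) : IsCoprime ((r.den : ℤ)) (r.num + r.den) := by
  have := (coprime_q r).symm.add_mul_left_right 1
  simpa using this

lemma g_num (r : ℚ) (hr : 0 ≤ r) : (1/(1 + r)).num = r.den := by
  rw [g_eq r hr]
  exact Rat.num_div_eq_of_coprime (g_pos_den r hr)
    (Int.isCoprime_iff_gcd_eq_one.mp (g_coprime r))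

lemma g_den (r : ℚ) (hr : 0 ≤ r) : ((1/(1 + r)).den : ℤ) = r.num + r.den := by
  rw [g_eq r hr]
  exact Rat.den_div_eq_of_coprime (g_pos_den r hr)
    (Int.isCoprime_iff_gcd_eq_one.mp (g_coprime r))

lemma num_le_den (r : ℚ) (hr : r ≤ 1) : r.num ≤ (r.den : ℤ) := by
  have hd : (0:ℚ) ≤ (r.den : ℚ) := by positivity
  have : (r.num : ℚ) ≤ (r.den : ℚ) := by
    rw [key_nd r]; nlinarith
  exact_mod_cast this

lemma mapsTo_f (m : ℕ) :
    Set.MapsTo (fun q : ℚ => (1 - q) / q) (FareyBRight m) (Farey m) := by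
  rintro q ⟨⟨h0, h1, hd2m, hdm, hnm⟩, hhalf⟩
  have hq : 0 < q := lt_of_lt_of_le (by norm_num) hhalf
  refine ⟨div_nonneg (by linarith) hq.le, ?_, ?_⟩
  · rw [div_le_one hq]; linarith
  · have := f_den q hq
    have : (((1 - q)/q).den : ℤ) ≤ (m : ℤ) := this ▸ hnm
    exact_mod_cast this

lemma mapsTo_g (m : ℕ) :
    Set.MapsTo (fun q : ℚ => 1 / (1 + q)) (Farey m) (FareyBRight m) := by
  rintro r ⟨h0, h1, hdm⟩
  have h1r : (0:ℚ) < 1 + r := by linarith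
  have hnum_le : r.num ≤ (r.den : ℤ) := num_le_den r h1
  have hden : ((1/(1 + r)).den : ℤ) = r.num + r.den := g_den r h0
  have hnum : (1/(1 + r)).num = r.den := g_num r h0
  have hdm' : (r.den : ℤ) ≤ (m : ℤ) := by exact_mod_cast hdm
  refine ⟨⟨by positivity, ?_, ?_, ?_, ?_⟩, ?_⟩
  · rw [div_le_one h1r]; linarith
  · have : ((1/(1 + r)).den : ℤ) ≤ (2 * m : ℤ) := by
      rw [hden]; omega
    exact_mod_cast this
  · rw [hden, hnum]; omega
  · rw [hnum]; omega
  · rw [le_div_iff₀ h1r]; linarith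

lemma left_inv_fg (q : ℚ) (hq : 0 < q) : 1/(1 + (1 - q)/q) = q := by
  have h : 1 + (1 - q)/q = 1/q := by field_simp; ring
  rw [h, one_div_one_div]

lemma right_inv_fg (r : ℚ) (hr : 0 ≤ r) : (1 - 1/(1 + r)) / (1/(1 + r)) = r := by
  have h1r : (0:ℚ) < 1 + r := by linarith
  field_simp; ring

lemma strictAnti_f (m : ℕ) :
    StrictAntiOn (fun q : ℚ => (1 - q) / q) (FareyBRight m) := by
  rintro a ⟨_, ha⟩ b ⟨_, hb⟩ hab
  have ha' : 0 < a := lt_of_lt_of_le (by norm_num) ha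
  have hb' : 0 < b := lt_of_lt_of_le (by norm_num) hb
  simp only
  rw [div_lt_div_iff₀ hb' ha']
  nlinarith

theorem fareyBRight_to_farey_reversing (m : ℕ) (hm : 1 < m) :
    Set.BijOn (fun q : ℚ => (1 - q) / q) (FareyBRight m) (Farey m) ∧
      StrictAntiOn (fun q : ℚ => (1 - q) / q) (FareyBRight m) ∧
      Set.InvOn (fun q : ℚ => 1 / (1 + q)) (fun q : ℚ => (1 - q) / q)
        (FareyBRight m) (Farey m) := by
  have hinv : Set.InvOn (fun q : ℚ => 1 / (1 + q)) (fun q : ℚ => (1 - q) / q)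
      (FareyBRight m) (Farey m) := by
    constructor
    · rintro q ⟨_, hq⟩
      exact left_inv_fg q (lt_of_lt_of_le (by norm_num) hq)
    · rintro r ⟨h0, _, _⟩
      exact right_inv_fg r h0
  refine ⟨⟨mapsTo_f m, (strictAnti_f m).injOn, ?_⟩, strictAnti_f m, hinv⟩
  intro r hr
  exact ⟨1/(1+r), mapsTo_g m hr, hinv.2 hr⟩
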